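/- Let Ω, Θ be finite sets, θ̃ : Ω → Θ a function, and let τ, τ' be finitely supported Bayes-plausible distributions over Δ(Ω) such that τ is a mean-preserving spread of τ' via a Markov kernel K (each atom μ' of τ' is replaced by a distribution K(·|μ') over Δ(Ω) with barycenter μ'). Then the pushforward τ^θ of τ under μ ↦ μ∘θ̃⁻¹ is a mean-preserving spread of the pushforward τ'^θ of τ'. -/
import Mathlib


open Finset

/-- If τ is a mean-preserving spread of τ' (over posteriors on Ω), then the induced
distributions over θ̃-marginal posteriors are ordered the same way: there is a
barycenter-preserving kernel witnessing the spread at the Θ-level. -/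
theorem stmt_10 {Ω Θ : Type*} [Fintype Ω] [Fintype Θ] [DecidableEq Θ]
    (tθ : Ω → Θ)
    (push : (Ω → ℝ) → Θ → ℝ)
    (hpush : ∀ m j, push m j = ∑ ω ∈ Finset.univ.filter (fun ω => tθ ω = j), m ω)
    (K' K : ℕ) (w' : Fin K' → ℝ) (μ' : Fin K' → Ω → ℝ)
    (w : Fin K → ℝ) (μ : Fin K → Ω → ℝ)
    (hw'nn : ∀ i, 0 ≤ w' i) (hw'one : ∑ i, w' i = 1)
    (Kk : Fin K' → Fin K → ℝ)
    (hKnn : ∀ i j, 0 ≤ Kk i j) (hKone : ∀ i, ∑ j, Kk i j = 1)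
    (hbary : ∀ i, ∑ j, Kk i j • μ j = μ' i)
    (hmix : ∀ j, w j = ∑ i, w' i * Kk i j) :
    ∃ Q : Fin K' → Fin K → ℝ,
      (∀ i j, 0 ≤ Q i j) ∧ (∀ i, ∑ j, Q i j = 1) ∧
      (∀ i, ∑ j, Q i j • push (μ j) = push (μ' i)) ∧
      (∀ j, w j = ∑ i, w' i * Q i j) := by
  refine ⟨Kk, hKnn, hKone, ?_, hmix⟩
  intro i
  funext t
  rw [← hbary i]
  simp only [hpush, Finset.sum_apply, Pi.smul_apply, smul_eq_mul,
    Finset.mul_sum]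
  rw [Finset.sum_comm]
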